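/- Let X be a real Banach space and let x ∈ S_X. Then x is a weakly almost locally uniformly rotund (w-aLUR) point of S_X if and only if x (viewed via the canonical embedding of X into its bidual X**) is a rotund point of the closed unit ball B_{X**} of the bidual. -/

import Mathlib

open Filter Topology NormedSpace

/-- `x` is a weakly almost locally uniformly rotund (w-aLUR) point of the unit sphere:
under the aLUR double-limit condition the sequence `{x_n}` converges weakly to `x`. -/
def WALURPoint {Z : Type*} [NormedAddCommGroup Z] [NormedSpace ℝ Z] (x : Z) : Prop :=
  ∀ (xs : ℕ → Z) (fs : ℕ → StrongDual ℝ Z) (α : ℕ → ℝ),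
    (∀ n, ‖xs n‖ = 1) → (∀ m, ‖fs m‖ = 1) →
    (∀ m, Tendsto (fun n => fs m ((2 : ℝ)⁻¹ • (xs n + x))) atTop (𝓝 (α m))) →
    Tendsto α atTop (𝓝 1) →
    ∀ g : StrongDual ℝ Z, Tendsto (fun n => g (xs n)) atTop (𝓝 (g x))

/-- `u` (with `‖u‖ = 1`) is a rotund point of the closed unit ball of `Z`:
any norm-one `v` with `‖u + v‖ = 2` equals `u`. -/
def RotundPoint {Z : Type*} [NormedAddCommGroup Z] [NormedSpace ℝ Z] (u : Z) : Prop :=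
  ∀ v : Z, ‖v‖ = 1 → ‖u + v‖ = 2 → v = u


section AuxWALUR

lemma approx_helly {X : Type*} [NormedAddCommGroup X] [NormedSpace ℝ X]
    (F : StrongDual ℝ (StrongDual ℝ X)) (hF : ‖F‖ ≤ 1) (s : Finset (StrongDual ℝ X)) {ε : ℝ} (hε : 0 < ε) :
    ∃ y : X, ‖y‖ ≤ 1 + ε ∧ ∀ f ∈ s, |f y - F f| ≤ ε := by
  classical
  set T : X →L[ℝ] ({f // f ∈ s} → ℝ) :=
    ContinuousLinearMap.pi (fun i : {f // f ∈ s} => (i : StrongDual ℝ X)) with hT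
  set B : Set X := Metric.closedBall 0 (1 + ε) with hB
  set c : {f // f ∈ s} → ℝ := fun i => F (i : StrongDual ℝ X) with hc
  have hε1 : (0:ℝ) < 1 + ε := by linarith
  have hcmem : c ∈ closure (T '' B) := by
    by_contra hcon
    obtain ⟨φ, u, hsep, hu⟩ := geometric_hahn_banach_closed_point
      ((convex_closedBall (0:X) (1+ε)).linear_image T.toLinearMap).closure isClosed_closure hcon
    have hupos : 0 < u := by
      have h0 : (0 : {f // f ∈ s} → ℝ) ∈ closure (T '' B) := by
        apply subset_closure
        exact ⟨0, Metric.mem_closedBall.2 (by simp [hε1.le]), by simp⟩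
      have := hsep _ h0
      simpa using this
    set lam : {f // f ∈ s} → ℝ := fun i => φ (fun j => if i = j then 1 else 0) with hlam
    set ψ : StrongDual ℝ X := ∑ i : {f // f ∈ s}, lam i • (i : StrongDual ℝ X) with hψ
    have hφsum : ∀ v : {f // f ∈ s} → ℝ, φ v = ∑ i, v i * lam i := by
      intro v
      have h1 := LinearMap.pi_apply_eq_sum_univ (φ : ({f // f ∈ s} → ℝ) →ₗ[ℝ] ℝ) v
      simpa [hlam, smul_eq_mul] using h1
    have hψy : ∀ y : X, ψ y = φ (T y) := by
      intro y
      rw [hφsum]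
      simp [hψ, ContinuousLinearMap.sum_apply, ContinuousLinearMap.smul_apply, smul_eq_mul,
        hT, ContinuousLinearMap.pi_apply, mul_comm]
    have hFψ : F ψ = φ c := by
      rw [hφsum]
      simp [hψ, map_sum, map_smul, smul_eq_mul, hc, mul_comm]
    have hmem : ∀ z : X, ‖z‖ ≤ 1 + ε → φ (T z) < u := fun z hz =>
      hsep _ (subset_closure ⟨z, Metric.mem_closedBall.2 (by simpa using hz), rfl⟩)
    have hψbound : ∀ y : X, ‖y‖ ≤ 1 + ε → |ψ y| ≤ u := by
      intro y hy
      have h1 : ψ y < u := by rw [hψy]; exact hmem y hy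
      have h2 : -ψ y < u := by
        have : ψ (-y) < u := by rw [hψy]; exact hmem (-y) (by simpa using hy)
        simpa using this
      rw [abs_le]; constructor <;> linarith
    have hψnorm : ‖ψ‖ ≤ u / (1 + ε) := by
      apply ContinuousLinearMap.opNorm_le_bound' _ (by positivity)
      intro y hy
      have hy0 : 0 < ‖y‖ := lt_of_le_of_ne (norm_nonneg _) (Ne.symm hy)
      have hz : ‖((1+ε) / ‖y‖) • y‖ ≤ 1 + ε := by
        rw [norm_smul, Real.norm_eq_abs, abs_of_pos (by positivity),
          div_mul_cancel₀ _ (ne_of_gt hy0)]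
      have hb := hψbound _ hz
      rw [map_smul, smul_eq_mul, abs_mul, abs_of_pos (by positivity : (0:ℝ) < (1+ε)/‖y‖)] at hb
      rw [Real.norm_eq_abs, div_mul_eq_mul_div, le_div_iff₀ hε1]
      calc |ψ y| * (1 + ε) = (1 + ε) / ‖y‖ * |ψ y| * ‖y‖ := by field_simp
        _ ≤ u * ‖y‖ := mul_le_mul_of_nonneg_right hb (norm_nonneg y)
    have hcontr : φ c < u := by
      rw [← hFψ]
      calc F ψ ≤ |F ψ| := le_abs_self _
        _ ≤ ‖F‖ * ‖ψ‖ := by simpa using F.le_opNorm ψ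
        _ ≤ 1 * (u / (1 + ε)) := by
            apply mul_le_mul hF hψnorm (norm_nonneg _) zero_le_one
        _ < u := by rw [one_mul, div_lt_iff₀ hε1]; nlinarith
    linarith
  rw [Metric.mem_closure_iff] at hcmem
  obtain ⟨p, ⟨y, hyB, hyp⟩, hdist⟩ := hcmem ε hε
  refine ⟨y, by simpa [hB] using hyB, fun f hf => ?_⟩
  have hdist' : ‖c - T y‖ < ε := by
    rw [← hyp] at hdist
    simpa [dist_eq_norm] using hdist
  calc |f y - F f| = ‖(c - T y) ⟨f, hf⟩‖ := by
        simp [hc, hT, ContinuousLinearMap.pi_apply, abs_sub_comm, Real.norm_eq_abs]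
    _ ≤ ‖c - T y‖ := norm_le_pi_norm _ _
    _ ≤ ε := hdist'.le


lemma norm_J {X : Type*} [NormedAddCommGroup X] [NormedSpace ℝ X] (x : X) :
    ‖inclusionInDoubleDual ℝ X x‖ = ‖x‖ :=
  (inclusionInDoubleDualLi ℝ (E := X)).norm_map x

-- 1/(n+3) → 0


lemma tendsto_aux : Tendsto (fun n : ℕ => 1 / ((n : ℝ) + 3)) atTop (𝓝 0) := by
  have h : Tendsto (fun n : ℕ => ((n : ℝ) + 3)) atTop atTop :=
    tendsto_atTop_add_const_right _ 3 tendsto_natCast_atTop_atTop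
  simpa [one_div, Pi.inv_def] using h.inv_tendsto_atTop


lemma walur_imp_rotund {X : Type*} [NormedAddCommGroup X] [NormedSpace ℝ X]
    (x : X) (hx : ‖x‖ = 1) (hW : WALURPoint x) :
    RotundPoint (inclusionInDoubleDual ℝ X x) := by
  classical
  intro v hv1 hv2
  set J : StrongDual ℝ (StrongDual ℝ X) := inclusionInDoubleDual ℝ X x with hJdef
  set T : StrongDual ℝ (StrongDual ℝ X) := J + v with hTdef
  have hT2 : ‖T‖ = 2 := hv2
  -- select norming functionals
  have hsel : ∀ m : ℕ, ∃ f : StrongDual ℝ X, ‖f‖ = 1 ∧ 2 - 1 / ((m : ℝ) + 3) < T f := by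
    intro m
    have hlt : 2 - 1 / ((m : ℝ) + 3) < ‖T‖ := by
      rw [hT2]
      have : (0:ℝ) < 1 / ((m:ℝ) + 3) := by positivity
      linarith
    obtain ⟨z, hz1, hz2⟩ := T.exists_lt_apply_of_lt_opNorm hlt
    have hTz : 2 - 1 / ((m : ℝ) + 3) < |T z| := by simpa [Real.norm_eq_abs] using hz2
    have hTzpos : (0:ℝ) < |T z| := by
      have h3 : (1:ℝ) / ((m:ℝ) + 3) ≤ 1 := by
        rw [div_le_one (by positivity)]; linarith [Nat.cast_nonneg (α := ℝ) m]
      linarith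
    have hz0 : z ≠ 0 := by
      intro h; rw [h, map_zero] at hTzpos; simp at hTzpos
    have hzn : (0:ℝ) < ‖z‖ := norm_pos_iff.2 hz0
    set sgn : ℝ := if 0 ≤ T z then 1 else -1 with hsgn
    have hsgnabs : |sgn| = 1 := by
      rw [hsgn]; split <;> simp
    have hsgnmul : sgn * T z = |T z| := by
      rw [hsgn]; rcases le_or_gt 0 (T z) with h | h
      · simp [h, abs_of_nonneg h]
      · simp [not_le.2 h, abs_of_neg h]
    refine ⟨(‖z‖⁻¹ * sgn) • z, ?_, ?_⟩
    · rw [norm_smul, Real.norm_eq_abs, abs_mul, abs_of_pos (inv_pos.2 hzn), hsgnabs,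
        mul_one, inv_mul_cancel₀ (ne_of_gt hzn)]
    · rw [map_smul, smul_eq_mul, mul_assoc, hsgnmul]
      have hinv : (1:ℝ) ≤ ‖z‖⁻¹ := by
        rw [le_inv_comm₀ zero_lt_one hzn]; simpa using hz1.le
      calc 2 - 1 / ((m : ℝ) + 3) < |T z| := hTz
        _ = 1 * |T z| := (one_mul _).symm
        _ ≤ ‖z‖⁻¹ * |T z| := mul_le_mul_of_nonneg_right hinv hTzpos.le
  choose fs hfs1 hfs2 using hsel
  have hvle : ‖v‖ ≤ 1 := hv1.le
  have hJ1 : ‖J‖ = 1 := by rw [hJdef, norm_J, hx]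
  -- key claim: v agrees with J on every functional
  have key : ∀ g : StrongDual ℝ X, v g = g x := by
    intro g
    -- build the approximating sequence
    have hyex : ∀ n : ℕ, ∃ y : X, ‖y‖ ≤ 1 + 1 / ((n : ℝ) + 3) ∧
        ∀ f ∈ insert g ((Finset.range (n+1)).image fs), |f y - v f| ≤ 1 / ((n : ℝ) + 3) :=
      fun n => approx_helly v hvle _ (by positivity)
    choose y hy1 hy2 using hyex
    -- estimates on v (fs k)
    have hvfs : ∀ k : ℕ, 1 - 1 / ((k : ℝ) + 3) < v (fs k) := by
      intro k
      have h1 : T (fs k) = fs k x + v (fs k) := by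
        rw [hTdef]; simp [hJdef, dual_def]
      have h2 : fs k x ≤ 1 := by
        calc fs k x ≤ |fs k x| := le_abs_self _
          _ ≤ ‖fs k‖ * ‖x‖ := by simpa using (fs k).le_opNorm x
          _ = 1 := by rw [hfs1 k, hx, mul_one]
      have := hfs2 k
      rw [h1] at this
      linarith
    -- lower bound on ‖y n‖
    have hylb : ∀ n : ℕ, 1 - 2 / ((n : ℝ) + 3) ≤ ‖y n‖ := by
      intro n
      have hmem : fs n ∈ insert g ((Finset.range (n+1)).image fs) := by
        apply Finset.mem_insert_of_mem
        exact Finset.mem_image_of_mem fs (Finset.mem_range.2 (Nat.lt_succ_self n))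
      have h1 := hy2 n (fs n) hmem
      have h2 : v (fs n) - 1 / ((n : ℝ) + 3) ≤ fs n (y n) := by
        have := abs_le.1 h1; linarith [this.1]
      have h3 : fs n (y n) ≤ ‖y n‖ := by
        calc fs n (y n) ≤ |fs n (y n)| := le_abs_self _
          _ ≤ ‖fs n‖ * ‖y n‖ := by simpa using (fs n).le_opNorm (y n)
          _ = ‖y n‖ := by rw [hfs1 n, one_mul]
      have h4 := hvfs n
      have : 1 - 2 / ((n : ℝ) + 3) ≤ fs n (y n) := by
        have : (2:ℝ) / ((n : ℝ) + 3) = 1 / ((n : ℝ) + 3) + 1 / ((n : ℝ) + 3) := by ring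
        linarith
      linarith
    have hy3 : ∀ n : ℕ, (1:ℝ)/3 ≤ ‖y n‖ := by
      intro n
      have h1 : (2:ℝ) / ((n:ℝ) + 3) ≤ 2/3 := by
        apply div_le_div_of_nonneg_left (by norm_num) (by norm_num)
        · linarith [Nat.cast_nonneg (α := ℝ) n]
      have := hylb n
      linarith
    have hyn0 : ∀ n, ‖y n‖ ≠ 0 := fun n => by
      have := hy3 n; positivity
    -- norm of y n tends to 1
    have hynlim : Tendsto (fun n => ‖y n‖) atTop (𝓝 1) := by
      apply tendsto_of_tendsto_of_tendsto_of_le_of_le'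
        (g := fun n : ℕ => 1 - 2 / ((n : ℝ) + 3)) (h := fun n : ℕ => 1 + 1 / ((n : ℝ) + 3))
      · have : Tendsto (fun n : ℕ => 2 / ((n : ℝ) + 3)) atTop (𝓝 0) := by
          have := tendsto_aux.const_mul 2
          simpa [one_div, mul_comm, div_eq_mul_inv] using this
        simpa using (tendsto_const_nhds (x := (1:ℝ))).sub this
      · simpa using (tendsto_const_nhds (x := (1:ℝ))).add tendsto_aux
      · exact Filter.Eventually.of_forall hylb
      · exact Filter.Eventually.of_forall hy1
    -- normalized sequence
    set xs : ℕ → X := fun n => ‖y n‖⁻¹ • y n with hxsdef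
    have hxs : ∀ n, ‖xs n‖ = 1 := by
      intro n
      rw [hxsdef]
      simp only [norm_smul, Real.norm_eq_abs, abs_of_pos (inv_pos.2 ((lt_of_lt_of_le (by norm_num) (hy3 n))))]
      rw [inv_mul_cancel₀ (hyn0 n)]
    -- transfer limits from y to xs
    have htrans : ∀ (f : StrongDual ℝ X) (c : ℝ),
        Tendsto (fun n => f (y n)) atTop (𝓝 c) → Tendsto (fun n => f (xs n)) atTop (𝓝 c) := by
      intro f c hc
      have hinv : Tendsto (fun n => ‖y n‖⁻¹) atTop (𝓝 1) := by
        have := hynlim.inv₀ one_ne_zero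
        simpa using this
      have := hinv.mul hc
      rw [one_mul] at this
      simpa [hxsdef, map_smul, smul_eq_mul] using this
    -- fs m (y n) → v (fs m)
    have hfsy : ∀ m : ℕ, Tendsto (fun n => fs m (y n)) atTop (𝓝 (v (fs m))) := by
      intro m
      have hsq : Tendsto (fun n => fs m (y n) - v (fs m)) atTop (𝓝 0) := by
        apply squeeze_zero_norm' (a := fun n : ℕ => 1 / ((n : ℝ) + 3)) _ tendsto_aux
        filter_upwards [Filter.eventually_ge_atTop m] with n hn
        have hmem : fs m ∈ insert g ((Finset.range (n+1)).image fs) := by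
          apply Finset.mem_insert_of_mem
          exact Finset.mem_image_of_mem fs (Finset.mem_range.2 (Nat.lt_succ_of_le hn))
        simpa [Real.norm_eq_abs] using hy2 n (fs m) hmem
      have := hsq.add (tendsto_const_nhds (x := v (fs m)))
      simpa using this
    -- g (y n) → v g
    have hgy : Tendsto (fun n => g (y n)) atTop (𝓝 (v g)) := by
      have hsq : Tendsto (fun n => g (y n) - v g) atTop (𝓝 0) := by
        apply squeeze_zero_norm' (a := fun n : ℕ => 1 / ((n : ℝ) + 3)) _ tendsto_aux
        apply Filter.Eventually.of_forall
        intro n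
        simpa [Real.norm_eq_abs] using hy2 n g (Finset.mem_insert_self g _)
      have := hsq.add (tendsto_const_nhds (x := v g))
      simpa using this
    -- the α sequence
    set α : ℕ → ℝ := fun m => (2:ℝ)⁻¹ * (v (fs m) + fs m x) with hαdef
    have hα : ∀ m, Tendsto (fun n => fs m ((2 : ℝ)⁻¹ • (xs n + x))) atTop (𝓝 (α m)) := by
      intro m
      have h1 : Tendsto (fun n => fs m (xs n)) atTop (𝓝 (v (fs m))) :=
        htrans (fs m) _ (hfsy m)
      have h2 := (h1.add (tendsto_const_nhds (x := fs m x))).const_mul (2:ℝ)⁻¹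
      rw [hαdef]
      refine h2.congr fun n => ?_
      simp [map_smul, map_add, smul_eq_mul, mul_add]
    have hα1 : Tendsto α atTop (𝓝 1) := by
      apply tendsto_of_tendsto_of_tendsto_of_le_of_le'
        (g := fun m : ℕ => 1 - 1 / ((m : ℝ) + 3)) (h := fun _ : ℕ => (1:ℝ))
      · simpa using (tendsto_const_nhds (x := (1:ℝ))).sub tendsto_aux
      · exact tendsto_const_nhds
      · apply Filter.Eventually.of_forall
        intro m
        have h1 : T (fs m) = fs m x + v (fs m) := by
          rw [hTdef]; simp [hJdef, dual_def]
        have := hfs2 m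
        rw [h1] at this
        rw [hαdef]
        simp only
        have hp : (0:ℝ) < 1 / ((m:ℝ) + 3) := by positivity
        linarith
      · apply Filter.Eventually.of_forall
        intro m
        have h1 : T (fs m) = fs m x + v (fs m) := by
          rw [hTdef]; simp [hJdef, dual_def]
        have h2 : T (fs m) ≤ 2 := by
          calc T (fs m) ≤ |T (fs m)| := le_abs_self _
            _ ≤ ‖T‖ * ‖fs m‖ := by simpa using T.le_opNorm (fs m)
            _ = 2 := by rw [hT2, hfs1 m, mul_one]
        rw [hαdef]
        simp only
        rw [h1] at h2
        linarith
    -- apply wALUR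
    have hconc := hW xs fs α hxs hfs1 hα hα1 g
    have hgxs : Tendsto (fun n => g (xs n)) atTop (𝓝 (v g)) := htrans g _ hgy
    exact (tendsto_nhds_unique hgxs hconc)
  -- conclude
  apply ContinuousLinearMap.ext
  intro f
  rw [key f, hJdef, dual_def]


lemma rotund_imp_walur {X : Type*} [NormedAddCommGroup X] [NormedSpace ℝ X]
    (x : X) (hx : ‖x‖ = 1) (hR : RotundPoint (inclusionInDoubleDual ℝ X x)) :
    WALURPoint x := by
  classical
  intro xs fs α hxs hfs hαlim hα1 g
  set J : StrongDual ℝ (StrongDual ℝ X) := inclusionInDoubleDual ℝ X x with hJdef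
  have hJ : ‖J‖ = 1 := by rw [hJdef, norm_J, hx]
  rw [tendsto_iff_ultrafilter]
  intro U hU
  -- ultrafilter limits define an element of the bidual
  have key : ∀ f : StrongDual ℝ X, ∃ c ∈ Set.Icc (-‖f‖) ‖f‖,
      Tendsto (fun n => f (xs n)) (U : Filter ℕ) (𝓝 c) := by
    intro f
    have hmap : (Ultrafilter.map (fun n => f (xs n)) U : Filter ℝ) ≤
        𝓟 (Set.Icc (-‖f‖) ‖f‖) := by
      rw [le_principal_iff]
      refine Filter.mem_map.2 (Filter.univ_mem' fun n => ?_)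
      have := f.le_opNorm (xs n)
      rw [hxs n, mul_one] at this
      exact Set.mem_Icc.2 (abs_le.1 ((le_abs_self _).trans (by simpa using this)))
    obtain ⟨c, hc, hle⟩ := isCompact_Icc.ultrafilter_le_nhds _ hmap
    exact ⟨c, hc, hle⟩
  choose Φ hΦmem hΦlim using key
  have hadd : ∀ f g' : StrongDual ℝ X, Φ (f + g') = Φ f + Φ g' := by
    intro f g'
    refine tendsto_nhds_unique (hΦlim (f + g')) ?_
    have := (hΦlim f).add (hΦlim g')
    simpa using this
  have hsmul : ∀ (c : ℝ) (f : StrongDual ℝ X), Φ (c • f) = c * Φ f := by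
    intro c f
    refine tendsto_nhds_unique (hΦlim (c • f)) ?_
    have := (hΦlim f).const_mul c
    simpa using this
  set F : StrongDual ℝ (StrongDual ℝ X) :=
    LinearMap.mkContinuous
      { toFun := Φ, map_add' := hadd, map_smul' := hsmul } 1
      (fun f => by
        rw [one_mul]
        exact abs_le.2 ⟨(hΦmem f).1, (hΦmem f).2⟩) with hFdef
  have hFapp : ∀ f : StrongDual ℝ X, F f = Φ f := fun f => rfl
  have hFle : ‖F‖ ≤ 1 := LinearMap.mkContinuous_norm_le _ zero_le_one _
  -- compute (J + F) (fs m) = 2 * α m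
  have hJF : ∀ m, (J + F) (fs m) = 2 * α m := by
    intro m
    have h1 : Tendsto (fun n => fs m ((2 : ℝ)⁻¹ • (xs n + x))) (U : Filter ℕ) (𝓝 (α m)) :=
      (hαlim m).mono_left hU
    have h2 : Tendsto (fun n => fs m ((2 : ℝ)⁻¹ • (xs n + x))) (U : Filter ℕ)
        (𝓝 ((2:ℝ)⁻¹ * (Φ (fs m) + fs m x))) := by
      have hc : Tendsto (fun _ : ℕ => fs m x) (U : Filter ℕ) (𝓝 (fs m x)) :=
        tendsto_const_nhds
      have h3 := ((hΦlim (fs m)).add hc).const_mul (2:ℝ)⁻¹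
      have heq : (fun n => (2:ℝ)⁻¹ * ((fs m) (xs n) + (fs m) x)) =
          fun n => fs m ((2 : ℝ)⁻¹ • (xs n + x)) := by
        funext n; rw [map_smul, map_add]; simp [smul_eq_mul]
      rw [← heq]
      simpa using h3
    have := tendsto_nhds_unique h1 h2
    simp only [ContinuousLinearMap.add_apply, hFapp, hJdef, dual_def]
    rw [this]; ring
  have h2le : 2 ≤ ‖J + F‖ := by
    have hbd : ∀ m, 2 * α m ≤ ‖J + F‖ := by
      intro m
      rw [← hJF m]
      calc (J + F) (fs m) ≤ |(J + F) (fs m)| := le_abs_self _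
        _ ≤ ‖J + F‖ * ‖fs m‖ := by simpa using (J + F).le_opNorm (fs m)
        _ = ‖J + F‖ := by rw [hfs m, mul_one]
    have hlim2 : Tendsto (fun m => 2 * α m) atTop (𝓝 2) := by
      simpa using hα1.const_mul 2
    exact le_of_tendsto hlim2 (Filter.Eventually.of_forall hbd)
  have hJFle : ‖J + F‖ ≤ 2 := by
    calc ‖J + F‖ ≤ ‖J‖ + ‖F‖ := norm_add_le J F
      _ ≤ 2 := by rw [hJ]; linarith
  have hF1 : ‖F‖ = 1 := by
    have : 2 ≤ ‖J‖ + ‖F‖ := h2le.trans (norm_add_le J F)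
    rw [hJ] at this
    linarith
  have hFJ : F = J := hR F hF1 (le_antisymm hJFle h2le)
  have : Tendsto (fun n => g (xs n)) (U : Filter ℕ) (𝓝 (F g)) := hΦlim g
  rw [hFJ, hJdef, dual_def] at this
  exact this

end AuxWALUR

/-- `x ∈ S_X` is a w-aLUR point of `S_X` if and only if the canonical image of `x` in the
bidual `X**` is a rotund point of the closed unit ball of `X**`. -/
theorem wALUR_iff_rotund_in_bidual {X : Type*} [NormedAddCommGroup X] [NormedSpace ℝ X]
    [CompleteSpace X] (x : X) (hx : ‖x‖ = 1) :
    WALURPoint x ↔ RotundPoint (inclusionInDoubleDual ℝ X x) := by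
  exact ⟨fun hW => walur_imp_rotund x hx hW, fun hR => rotund_imp_walur x hx hR⟩
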